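/- arXiv:nlin/0611053 — 3 statements merged into one kernel-verified Lean document; each statement's English description precedes it below -/
import Mathlib

section
/- Let R be an associative unital ring, σ : R → R an anti-automorphism, and let ∂, L ∈ R be units and M ∈ R an element satisfying σ(L) = −∂L∂⁻¹ and σ(M) = σ(L)⁻¹·∂·M·∂⁻¹·σ(L). Then for every natural number m ≥ 0 and every integer l, one has ∂⁻¹·σ(MᵐLˡ)·∂ = (−1)ˡ·L^{l−1}·Mᵐ·L. Consequently the elements A_{ml}(L,M) = MᵐLˡ − (−1)ˡ L^{l−1}MᵐL satisfy ∂⁻¹·σ(A_{ml}(L,M))·∂ = −A_{ml}(L,M), i.e. they are the generators of the additional symmetries of the BKP hierarchy compatible with the B-type constraint. -/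
/-- Let `R` be an associative unital ring, `σ` an anti-automorphism,
`d` (playing the role of `∂`) and `L` units of `R` and `M ∈ R` with
`σ(L) = −∂L∂⁻¹` and `σ(M) = σ(L)⁻¹·∂·M·∂⁻¹·σ(L)`.  Then for every `m : ℕ` and `l : ℤ`,
`∂⁻¹·σ(MᵐLˡ)·∂ = (−1)ˡ·L^(l−1)·Mᵐ·L`, and consequently
`A_{ml} = MᵐLˡ − (−1)ˡ L^(l−1)MᵐL` satisfies `∂⁻¹·σ(A_{ml})·∂ = −A_{ml}`. -/
theorem bkp_additional_symmetry_generators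
    {R : Type*} [Ring R] (σ : R → R)
    (hadd : ∀ x y : R, σ (x + y) = σ x + σ y)
    (hmul : ∀ x y : R, σ (x * y) = σ y * σ x)
    (hbij : Function.Bijective σ)
    (d L : Rˣ) (M : R)
    (hL : σ (L : R) = -((d : R) * (L : R) * ((d⁻¹ : Rˣ) : R)))
    (hM : σ M = Ring.inverse (σ (L : R)) * (d : R) * M * ((d⁻¹ : Rˣ) : R) * σ (L : R)) :
    ∀ (m : ℕ) (l : ℤ),
      ((d⁻¹ : Rˣ) : R) * σ (M ^ m * ((L ^ l : Rˣ) : R)) * (d : R) =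
          (((-1 : Rˣ) ^ l : Rˣ) : R) * (((L ^ (l - 1) : Rˣ) : R) * M ^ m * (L : R)) ∧
      ((d⁻¹ : Rˣ) : R) *
            σ (M ^ m * ((L ^ l : Rˣ) : R) -
              (((-1 : Rˣ) ^ l : Rˣ) : R) * (((L ^ (l - 1) : Rˣ) : R) * M ^ m * (L : R))) *
            (d : R) =
        -(M ^ m * ((L ^ l : Rˣ) : R) -
            (((-1 : Rˣ) ^ l : Rˣ) : R) * (((L ^ (l - 1) : Rˣ) : R) * M ^ m * (L : R))) := by
  -- σ fixes 1 and 0, is odd, and preserves subtraction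
  have h1 : σ 1 = 1 := by
    obtain ⟨x, hx⟩ := hbij.2 1
    have h := hmul x 1
    rw [mul_one, hx, mul_one] at h
    exact h.symm
  have h0 : σ 0 = 0 := by
    have h := hadd 0 0
    rw [add_zero] at h
    exact (add_eq_left.mp h.symm)
  have hneg : ∀ x : R, σ (-x) = -σ x := by
    intro x
    have h := hadd x (-x)
    rw [add_neg_cancel, h0] at h
    exact (neg_eq_of_add_eq_zero_right h.symm).symm
  have hsub : ∀ x y : R, σ (x - y) = σ x - σ y := by
    intro x y
    rw [sub_eq_add_neg, hadd, hneg, sub_eq_add_neg]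
  -- the unit N = d * (-L) * d⁻¹, with σ(L) = N
  set N : Rˣ := d * (-L) * d⁻¹ with hN
  have hLu : σ (L : R) = (N : R) := by
    rw [hL]
    simp [hN, Units.val_mul, mul_neg, neg_mul]
  have hLinv : σ ((L⁻¹ : Rˣ) : R) = ((N⁻¹ : Rˣ) : R) := by
    have h := hmul ((L⁻¹ : Rˣ) : R) (L : R)
    rw [Units.inv_mul, h1, hLu] at h
    exact (Units.inv_eq_of_mul_eq_one_right h.symm).symm
  -- σ on integer powers of L
  have hP : ∀ l : ℤ, σ ((L ^ l : Rˣ) : R) = ((N ^ l : Rˣ) : R) := by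
    intro l
    induction l using Int.induction_on with
    | zero => simpa using h1
    | succ n ih =>
        rw [zpow_add_one, Units.val_mul, hmul, ih, hLu, ← Units.val_mul,
          show ((n : ℤ) + 1) = 1 + n by ring, zpow_one_add]
    | pred n ih =>
        rw [show (-(n : ℤ) - 1) = (-(n : ℤ)) + (-1) by ring, zpow_add,
          Units.val_mul, hmul, zpow_neg_one, hLinv, ih, ← Units.val_mul,
          show ((-(n : ℤ)) + (-1)) = (-1) + (-(n : ℤ)) by ring, zpow_add, zpow_neg_one]
  -- N^l in terms of signs and powers of L
  have hNl : ∀ l : ℤ, (N ^ l : Rˣ) = d * ((-1 : Rˣ) ^ l * L ^ l) * d⁻¹ := by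
    intro l
    have hc : Commute (-1 : Rˣ) L := by
      apply Units.ext
      simp
    have h1' : (-L : Rˣ) = (-1 : Rˣ) * L := by
      apply Units.ext
      simp
    rw [hN, conj_zpow, h1', hc.mul_zpow]
  -- σ on powers of M
  have hM' : σ M = (d : R) * (((L⁻¹ : Rˣ) : R) * M * (L : R)) * ((d⁻¹ : Rˣ) : R) := by
    have hNinv : Ring.inverse (σ (L : R)) = ((N⁻¹ : Rˣ) : R) := by
      rw [hLu, Ring.inverse_unit]
    rw [hM, hNinv, hLu, hN]
    simp only [mul_inv_rev, inv_neg, Units.val_mul, Units.val_neg, Units.val_inv_eq_inv_val]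
    simp only [mul_assoc, Units.inv_mul_cancel_left, Units.mul_inv_cancel_left,
      neg_mul, mul_neg, neg_neg, inv_inv]
  have hMm : ∀ m : ℕ, σ (M ^ m) =
      (d : R) * (((L⁻¹ : Rˣ) : R) * M ^ m * (L : R)) * ((d⁻¹ : Rˣ) : R) := by
    intro m
    have hpow : ∀ m : ℕ, σ (M ^ m) = (σ M) ^ m := by
      intro m
      induction m with
      | zero => simpa using h1
      | succ n ih => rw [pow_succ, hmul, ih, pow_succ']
    rw [hpow, hM', Units.conj_pow, Units.conj_pow']
  -- the key general computation
  have hGen : ∀ (m : ℕ) (a b : ℤ),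
      ((d⁻¹ : Rˣ) : R) * σ (((L ^ a : Rˣ) : R) * M ^ m * ((L ^ b : Rˣ) : R)) * (d : R) =
        (((-1 : Rˣ) ^ (a + b) : Rˣ) : R) *
          (((L ^ (b - 1) : Rˣ) : R) * M ^ m * ((L ^ (a + 1) : Rˣ) : R)) := by
    intro m a b
    have hodd : ∀ n : ℤ, Odd n → ((-1 : Rˣ) ^ n) = -1 := by
      intro n hn
      obtain ⟨k, hk⟩ := hn
      rw [hk, zpow_add, zpow_one, Even.neg_one_zpow ⟨k, two_mul k⟩, one_mul]
    have e1 : ((L ^ b : Rˣ) : R) * ((L⁻¹ : Rˣ) : R) = ((L ^ (b - 1) : Rˣ) : R) := by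
      rw [zpow_sub_one, Units.val_mul]
    have e2 : (L : R) * ((L ^ a : Rˣ) : R) = ((L ^ (a + 1) : Rˣ) : R) := by
      rw [add_comm, zpow_one_add, Units.val_mul]
    rw [hmul, hmul, hP, hP, hMm, hNl, hNl]
    rcases Int.even_or_odd a with ha | ha <;> rcases Int.even_or_odd b with hb | hb
    · rw [ha.neg_one_zpow, hb.neg_one_zpow, (ha.add hb).neg_one_zpow]
      simp only [one_mul, Units.val_mul, Units.val_one, Units.val_neg, mul_assoc,
        Units.inv_mul_cancel_left, Units.mul_inv_cancel_left, neg_mul, mul_neg, neg_neg,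
        Units.inv_mul, Units.mul_inv, mul_one]
      rw [← mul_assoc _ ((L⁻¹ : Rˣ) : R), e1, e2]
    · rw [ha.neg_one_zpow, hodd b hb, hodd (a + b) (ha.add_odd hb)]
      simp only [one_mul, Units.val_mul, Units.val_one, Units.val_neg, mul_assoc,
        Units.inv_mul_cancel_left, Units.mul_inv_cancel_left, neg_mul, mul_neg, neg_neg,
        Units.inv_mul, Units.mul_inv, mul_one]
      rw [← mul_assoc _ ((L⁻¹ : Rˣ) : R), e1, e2]
    · rw [hb.neg_one_zpow, hodd a ha, hodd (a + b) (ha.add_even hb)]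
      simp only [one_mul, Units.val_mul, Units.val_one, Units.val_neg, mul_assoc,
        Units.inv_mul_cancel_left, Units.mul_inv_cancel_left, neg_mul, mul_neg, neg_neg,
        Units.inv_mul, Units.mul_inv, mul_one]
      rw [← mul_assoc _ ((L⁻¹ : Rˣ) : R), e1, e2]
    · rw [hodd a ha, hodd b hb, (ha.add_odd hb).neg_one_zpow]
      simp only [one_mul, Units.val_mul, Units.val_one, Units.val_neg, mul_assoc,
        Units.inv_mul_cancel_left, Units.mul_inv_cancel_left, neg_mul, mul_neg, neg_neg,
        Units.inv_mul, Units.mul_inv, mul_one]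
      rw [← mul_assoc _ ((L⁻¹ : Rˣ) : R), e1, e2]
  -- signs are central and square to one, and fixed by σ
  intro m l
  set c : R := (((-1 : Rˣ) ^ l : Rˣ) : R) with hcdef
  have hcases : c = 1 ∨ c = -1 := by
    rcases Int.even_or_odd l with h | h
    · left; rw [hcdef, h.neg_one_zpow]; simp
    · right
      obtain ⟨k, hk⟩ := h
      rw [hcdef, hk, zpow_add, zpow_one, Even.neg_one_zpow ⟨k, two_mul k⟩, one_mul]
      simp
  have hcomm : ∀ x : R, c * x = x * c := by
    rcases hcases with h | h <;> intro x <;> rw [h] <;> simp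
  have hcc : c * c = 1 := by rcases hcases with h | h <;> rw [h] <;> simp
  have hσc : σ c = c := by
    rcases hcases with h | h <;> rw [h]
    · exact h1
    · rw [hneg, h1]
  -- Part 1
  have part1 : ((d⁻¹ : Rˣ) : R) * σ (M ^ m * ((L ^ l : Rˣ) : R)) * (d : R) =
      c * (((L ^ (l - 1) : Rˣ) : R) * M ^ m * (L : R)) := by
    have h := hGen m 0 l
    rw [zpow_zero] at h
    simp only [Units.val_one, one_mul, zero_add, zpow_one] at h
    exact h
  refine ⟨part1, ?_⟩
  -- Part 2
  have part2a : ((d⁻¹ : Rˣ) : R) *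
      σ (c * (((L ^ (l - 1) : Rˣ) : R) * M ^ m * (L : R))) * (d : R) =
      M ^ m * ((L ^ l : Rˣ) : R) := by
    have h := hGen m (l - 1) 1
    rw [show l - 1 + 1 = l by ring, show (1 : ℤ) - 1 = 0 by norm_num,
      zpow_zero, zpow_one] at h
    simp only [Units.val_one, one_mul] at h
    rw [hmul, hσc]
    calc ((d⁻¹ : Rˣ) : R) * (σ (((L ^ (l - 1) : Rˣ) : R) * M ^ m * (L : R)) * c) * (d : R)
        = ((d⁻¹ : Rˣ) : R) * σ (((L ^ (l - 1) : Rˣ) : R) * M ^ m * (L : R)) * (d : R) * c := by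
          simp only [mul_assoc]
          rw [hcomm]
      _ = c * (M ^ m * ((L ^ l : Rˣ) : R)) * c := by rw [h]
      _ = M ^ m * ((L ^ l : Rˣ) : R) := by
          rw [mul_assoc, ← hcomm (M ^ m * ((L ^ l : Rˣ) : R)), ← mul_assoc, hcc, one_mul]
  rw [hsub, mul_sub, sub_mul, part1, part2a, neg_sub]
end

section
/- Let τ, δτ : ℂ^ℕ → ℂ be functions such that for every t ∈ ℂ^ℕ the map s ↦ τ(t + 2[s]) from ℂ to ℂ is complex differentiable at s = 0 with derivative 2·δτ(t). Suppose that for every t ∈ ℂ^ℕ and all pairwise distinct nonzero s₁, s₂, s₃ ∈ ℂ: τ(t+2[s₁]+2[s₂]+2[s₃])·τ(t) = Σ_{(s₁,s₂,s₃)} [(s₁+s₂)(s₁+s₃)] / [(s₁−s₂)(s₁−s₃)] · τ(t+2[s₂]+2[s₃])·τ(t+2[s₁]), where the sum is over cyclic permutations of (s₁,s₂,s₃). Then the differential Fay identity of the BKP hierarchy holds: for every t ∈ ℂ^ℕ and all nonzero s₁ ≠ s₂, (1/s₂² − 1/s₁²)·{τ(t+2[s₁])τ(t+2[s₂]) − τ(t+2[s₁]+2[s₂])τ(t)}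 = (1/s₂ + 1/s₁)·{δτ(t+2[s₂])τ(t+2[s₁]) − δτ(t+2[s₁])τ(t+2[s₂])} + (1/s₂ − 1/s₁)·{τ(t+2[s₁]+2[s₂])δτ(t) − δτ(t+2[s₁]+2[s₂])τ(t)}. -/
/-- `bkpShift s` is the sequence `[s]` with `k`-th entry `s^(2k+1)/(2k+1)`,
`k`-th entry corresponding to the BKP time `t_{2k+1}`. -/
noncomputable def bkpShift (s : ℂ) : ℕ → ℂ :=
  fun k => s ^ (2 * k + 1) / (2 * (k : ℂ) + 1)

/-- Let `τ, δτ : ℂ^ℕ → ℂ` be such that for every `t` the map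
`s ↦ τ(t + 2[s])` is complex differentiable at `0` with derivative `2·δτ(t)`, and
suppose `τ` satisfies the `s₀ = 0` form of the BKP Fay quadrisecant identity.
Then the differential Fay identity of the BKP hierarchy holds. -/
theorem bkp_differential_fay
    (τ δτ : (ℕ → ℂ) → ℂ)
    (hderiv : ∀ t : ℕ → ℂ,
      HasDerivAt (fun s : ℂ => τ (t + 2 • bkpShift s)) (2 * δτ t) 0)
    (hFay : ∀ (t : ℕ → ℂ) (s1 s2 s3 : ℂ),
      s1 ≠ 0 → s2 ≠ 0 → s3 ≠ 0 → s1 ≠ s2 → s1 ≠ s3 → s2 ≠ s3 →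
      τ (t + 2 • bkpShift s1 + 2 • bkpShift s2 + 2 • bkpShift s3) * τ t =
        ((s1 + s2) * (s1 + s3)) / ((s1 - s2) * (s1 - s3)) *
            (τ (t + 2 • bkpShift s2 + 2 • bkpShift s3) * τ (t + 2 • bkpShift s1)) +
          ((s2 + s3) * (s2 + s1)) / ((s2 - s3) * (s2 - s1)) *
            (τ (t + 2 • bkpShift s3 + 2 • bkpShift s1) * τ (t + 2 • bkpShift s2)) +
          ((s3 + s1) * (s3 + s2)) / ((s3 - s1) * (s3 - s2)) *
            (τ (t + 2 • bkpShift s1 + 2 • bkpShift s2) * τ (t + 2 • bkpShift s3))) :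
    ∀ (t : ℕ → ℂ) (s1 s2 : ℂ), s1 ≠ 0 → s2 ≠ 0 → s1 ≠ s2 →
      (1 / s2 ^ 2 - 1 / s1 ^ 2) *
          (τ (t + 2 • bkpShift s1) * τ (t + 2 • bkpShift s2) -
            τ (t + 2 • bkpShift s1 + 2 • bkpShift s2) * τ t) =
        (1 / s2 + 1 / s1) *
            (δτ (t + 2 • bkpShift s2) * τ (t + 2 • bkpShift s1) -
              δτ (t + 2 • bkpShift s1) * τ (t + 2 • bkpShift s2)) +
          (1 / s2 - 1 / s1) *
            (τ (t + 2 • bkpShift s1 + 2 • bkpShift s2) * δτ t -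
              δτ (t + 2 • bkpShift s1 + 2 • bkpShift s2) * τ t) := by
  intro t s1 s2 h1 h2 h12
  simp only [two_smul] at hFay ⊢
  have hderiv' : ∀ t : ℕ → ℂ,
      HasDerivAt (fun s : ℂ => τ (t + (bkpShift s + bkpShift s))) (2 * δτ t) 0 := by
    intro u
    have := hderiv u
    simpa only [two_smul] using this
  have h0 : ∀ u : ℕ → ℂ, u + (bkpShift 0 + bkpShift 0) = u := by
    intro u; funext k; simp [bkpShift]
  have hA := hderiv' (t + (bkpShift s1 + bkpShift s1) + (bkpShift s2 + bkpShift s2))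
  have hB := hderiv' (t + (bkpShift s2 + bkpShift s2))
  have hC : HasDerivAt (fun s : ℂ => τ (t + (bkpShift s + bkpShift s) + (bkpShift s1 + bkpShift s1)))
      (2 * δτ (t + (bkpShift s1 + bkpShift s1))) 0 := by
    have heq : (fun s : ℂ => τ (t + (bkpShift s + bkpShift s) + (bkpShift s1 + bkpShift s1))) =
        fun s : ℂ => τ (t + (bkpShift s1 + bkpShift s1) + (bkpShift s + bkpShift s)) := by
      funext s; rw [add_right_comm]
    rw [heq]; exact hderiv' (t + (bkpShift s1 + bkpShift s1))
  have hE := hderiv' t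
  have hid : HasDerivAt (fun s : ℂ => s) 1 0 := hasDerivAt_id 0
  have hm1 : HasDerivAt (fun s : ℂ => s1 - s) (-1) 0 := by
    exact hid.const_sub s1
  have hm2 : HasDerivAt (fun s : ℂ => s2 - s) (-1) 0 := by
    exact hid.const_sub s2
  have hp1 : HasDerivAt (fun s : ℂ => s1 + s) 1 0 := by
    exact hid.const_add s1
  have hp2 : HasDerivAt (fun s : ℂ => s2 + s) 1 0 := by
    exact hid.const_add s2
  have hq := (hid.sub_const s1).mul (hid.sub_const s2)
  have hr := hm2.mul_const (s2 - s1)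
  have hc1 := ((hm1.const_mul (s1 - s2)).mul hr).mul hq
  have hc2 := ((hp1.const_mul (s1 + s2)).mul hr).mul hq
  have hc3 := ((hp2.mul_const (s2 + s1)).mul (hm1.const_mul (s1 - s2))).mul hq
  have hc4 := ((hid.add_const s1).mul (hid.add_const s2)).mul
    ((hm1.const_mul (s1 - s2)).mul hr)
  have hT1 := hc1.mul (hA.mul_const (τ t))
  have hT2 := hc2.mul (hB.mul_const (τ (t + (bkpShift s1 + bkpShift s1))))
  have hT3 := hc3.mul (hC.mul_const (τ (t + (bkpShift s2 + bkpShift s2))))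
  have hT4 := hc4.mul (hE.mul_const (τ (t + (bkpShift s1 + bkpShift s1) + (bkpShift s2 + bkpShift s2))))
  have hG := ((hT1.sub hT2).sub hT3).sub hT4
  have heq0 : (fun s : ℂ =>
      (s1 - s2) * (s1 - s) * ((s2 - s) * (s2 - s1)) * ((s - s1) * (s - s2)) *
          (τ (t + (bkpShift s1 + bkpShift s1) + (bkpShift s2 + bkpShift s2) + (bkpShift s + bkpShift s)) * τ t) -
        (s1 + s2) * (s1 + s) * ((s2 - s) * (s2 - s1)) * ((s - s1) * (s - s2)) *
          (τ (t + (bkpShift s2 + bkpShift s2) + (bkpShift s + bkpShift s)) * τ (t + (bkpShift s1 + bkpShift s1))) -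
        (s2 + s) * (s2 + s1) * ((s1 - s2) * (s1 - s)) * ((s - s1) * (s - s2)) *
          (τ (t + (bkpShift s + bkpShift s) + (bkpShift s1 + bkpShift s1)) * τ (t + (bkpShift s2 + bkpShift s2))) -
        (s + s1) * (s + s2) * ((s1 - s2) * (s1 - s) * ((s2 - s) * (s2 - s1))) *
          (τ (t + (bkpShift s + bkpShift s)) * τ (t + (bkpShift s1 + bkpShift s1) + (bkpShift s2 + bkpShift s2))))
      =ᶠ[nhds (0:ℂ)] (fun _ => (0:ℂ)) := by
    have hop : IsOpen ({s1, s2}ᶜ : Set ℂ) :=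
      ((Set.finite_singleton s2).insert s1).isClosed.isOpen_compl
    have hmem : (0:ℂ) ∈ ({s1, s2}ᶜ : Set ℂ) := by
      simp [Ne.symm h1, Ne.symm h2]
    filter_upwards [hop.mem_nhds hmem] with s hs
    simp only [Set.mem_compl_iff, Set.mem_insert_iff, Set.mem_singleton_iff, not_or] at hs
    obtain ⟨hs1, hs2⟩ := hs
    by_cases hz : s = 0
    · subst hz
      simp only [h0]
      ring
    · have hf := hFay t s1 s2 s h1 h2 hz h12 (Ne.symm hs1) (Ne.symm hs2)
      have d12 : s1 - s2 ≠ 0 := sub_ne_zero.mpr h12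
      have d1s : s1 - s ≠ 0 := sub_ne_zero.mpr (Ne.symm hs1)
      have d2s : s2 - s ≠ 0 := sub_ne_zero.mpr (Ne.symm hs2)
      have d21 : s2 - s1 ≠ 0 := sub_ne_zero.mpr (Ne.symm h12)
      have ds1 : s - s1 ≠ 0 := sub_ne_zero.mpr hs1
      have ds2 : s - s2 ≠ 0 := sub_ne_zero.mpr hs2
      field_simp at hf
      linear_combination hf
  have hG0 := (hasDerivAt_const (0:ℂ) (0:ℂ)).congr_of_eventuallyEq heq0
  have hD := hG.unique hG0
  simp only [h0, Pi.mul_apply] at hD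
  have d12 : s1 - s2 ≠ 0 := sub_ne_zero.mpr h12
  have key : 2*s1*s2*(s1-s2) *
      ((s1^2 - s2^2) * (τ (t + (bkpShift s1 + bkpShift s1)) * τ (t + (bkpShift s2 + bkpShift s2)) -
          τ (t + (bkpShift s1 + bkpShift s1) + (bkpShift s2 + bkpShift s2)) * τ t) -
        s1*s2*(s1+s2) * (δτ (t + (bkpShift s2 + bkpShift s2)) * τ (t + (bkpShift s1 + bkpShift s1)) -
          δτ (t + (bkpShift s1 + bkpShift s1)) * τ (t + (bkpShift s2 + bkpShift s2))) -
        s1*s2*(s1-s2) * (τ (t + (bkpShift s1 + bkpShift s1) + (bkpShift s2 + bkpShift s2)) * δτ t -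
          δτ (t + (bkpShift s1 + bkpShift s1) + (bkpShift s2 + bkpShift s2)) * τ t)) = 0 := by
    linear_combination -hD
  have hne : 2*s1*s2*(s1-s2) ≠ 0 := by
    simp [h1, h2, d12]
  have hX := (mul_eq_zero.mp key).resolve_left hne
  field_simp
  ring_nf at hX ⊢
  linear_combination hX
end

section
/- Let τ : ℂ^ℕ → ℂ satisfy, for every t ∈ ℂ^ℕ and all pairwise distinct nonzero s₁, s₂, s₃ ∈ ℂ: τ(t+2[s₁]+2[s₂]+2[s₃])·τ(t) = Σ_{(s₁,s₂,s₃)} [(s₁+s₂)(s₁+s₃)] / [(s₁−s₂)(s₁−s₃)] · τ(t+2[s₂]+2[s₃])·τ(t+2[s₁]), where the sum is over cyclic permutations of (s₁,s₂,s₃). Then for every t ∈ ℂ^ℕ and all nonzero λ, μ, z ∈ ℂ with z ≠ ±λ, z ≠ ±μ and λ + μ ≠ 0: [(z+λ)(z−μ)] / [(z−λ)(z+μ)] · τ(t)·τ(t+2[λ⁻¹]−2[z⁻¹]−2[μ⁻¹]) − τ(t−2[z⁻¹])·τ(t+2[λ⁻¹]−2[μ⁻¹]) = [(λ−μ)/(λ+μ)]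 · { [(z+λ)/(z−λ)]·τ(t−2[μ⁻¹])·τ(t+2[λ⁻¹]−2[z⁻¹]) − [(z−μ)/(z+μ)]·τ(t−2[z⁻¹]−2[μ⁻¹])·τ(t+2[λ⁻¹]) }. (This is the key tau-function identity, obtained from the Fay identity with s₁ = −z⁻¹, s₂ = λ⁻¹, s₃ = −μ⁻¹, used to rewrite the action of the vertex operator X_B(λ,μ) on the wave function in the proof of the Adler–Shiota–van Moerbeke formula for the BKP hierarchy.) -/
lemma bkpShift_neg (s : ℂ) : bkpShift (-s) = - bkpShift s := by
  funext k
  simp [bkpShift, Odd.neg_pow (odd_two_mul_add_one k), neg_div]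


set_option maxHeartbeats 1000000 in
/-- If `τ : ℂ^ℕ → ℂ` satisfies the `s₀ = 0` form of the BKP Fay
quadrisecant identity, then the key tau-function identity (obtained with
`s₁ = −z⁻¹`, `s₂ = λ⁻¹`, `s₃ = −μ⁻¹`) used to rewrite the vertex-operator action
on the wave function in the proof of the ASV formula holds. -/
theorem bkp_asv_key_tau_identity
    (τ : (ℕ → ℂ) → ℂ)
    (hFay : ∀ (t : ℕ → ℂ) (s1 s2 s3 : ℂ),
      s1 ≠ 0 → s2 ≠ 0 → s3 ≠ 0 → s1 ≠ s2 → s1 ≠ s3 → s2 ≠ s3 →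
      τ (t + 2 • bkpShift s1 + 2 • bkpShift s2 + 2 • bkpShift s3) * τ t =
        ((s1 + s2) * (s1 + s3)) / ((s1 - s2) * (s1 - s3)) *
            (τ (t + 2 • bkpShift s2 + 2 • bkpShift s3) * τ (t + 2 • bkpShift s1)) +
          ((s2 + s3) * (s2 + s1)) / ((s2 - s3) * (s2 - s1)) *
            (τ (t + 2 • bkpShift s3 + 2 • bkpShift s1) * τ (t + 2 • bkpShift s2)) +
          ((s3 + s1) * (s3 + s2)) / ((s3 - s1) * (s3 - s2)) *
            (τ (t + 2 • bkpShift s1 + 2 • bkpShift s2) * τ (t + 2 • bkpShift s3))) :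
    ∀ (t : ℕ → ℂ) (lam mu z : ℂ),
      lam ≠ 0 → mu ≠ 0 → z ≠ 0 → z ≠ lam → z ≠ -lam → z ≠ mu → z ≠ -mu →
      lam + mu ≠ 0 →
      ((z + lam) * (z - mu)) / ((z - lam) * (z + mu)) *
          (τ t * τ (t + 2 • bkpShift lam⁻¹ - 2 • bkpShift z⁻¹ - 2 • bkpShift mu⁻¹)) -
        τ (t - 2 • bkpShift z⁻¹) * τ (t + 2 • bkpShift lam⁻¹ - 2 • bkpShift mu⁻¹) =
      (lam - mu) / (lam + mu) *
        ((z + lam) / (z - lam) *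
            (τ (t - 2 • bkpShift mu⁻¹) * τ (t + 2 • bkpShift lam⁻¹ - 2 • bkpShift z⁻¹)) -
          (z - mu) / (z + mu) *
            (τ (t - 2 • bkpShift z⁻¹ - 2 • bkpShift mu⁻¹) * τ (t + 2 • bkpShift lam⁻¹))) := by
  intro t lam mu z hlam hmu hz hzl hznl hzm hznm hlm
  have hzl' : z - lam ≠ 0 := sub_ne_zero.mpr hzl
  have hznl' : z + lam ≠ 0 := fun h => hznl (by linear_combination h)
  have hzm' : z - mu ≠ 0 := sub_ne_zero.mpr hzm
  have hznm' : z + mu ≠ 0 := fun h => hznm (by linear_combination h)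
  have h12 : (-z⁻¹ : ℂ) ≠ lam⁻¹ := by
    intro he
    have h2 : (-z)⁻¹ = lam⁻¹ := by rw [inv_neg, he]
    exact hznl (neg_eq_iff_eq_neg.mp (inv_injective h2))
  have h13 : (-z⁻¹ : ℂ) ≠ -mu⁻¹ := by
    intro he
    exact hzm (inv_injective (neg_injective he))
  have h23 : (lam⁻¹ : ℂ) ≠ -mu⁻¹ := by
    intro he
    have h2 : lam⁻¹ = (-mu)⁻¹ := by rw [inv_neg, he]
    have := inv_injective h2
    exact hlm (by linear_combination this)
  have key := hFay t (-z⁻¹) lam⁻¹ (-mu⁻¹) (by simpa using hz) (by simpa using hlam)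
    (by simpa using hmu) h12 h13 h23
  rw [bkpShift_neg, bkpShift_neg, smul_neg, smul_neg] at key
  have e1 : t + -(2 • bkpShift z⁻¹) + 2 • bkpShift lam⁻¹ + -(2 • bkpShift mu⁻¹)
      = t + 2 • bkpShift lam⁻¹ - 2 • bkpShift z⁻¹ - 2 • bkpShift mu⁻¹ := by abel
  have e2 : t + 2 • bkpShift lam⁻¹ + -(2 • bkpShift mu⁻¹)
      = t + 2 • bkpShift lam⁻¹ - 2 • bkpShift mu⁻¹ := by abel
  have e3 : t + -(2 • bkpShift z⁻¹) = t - 2 • bkpShift z⁻¹ := by abel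
  have e4 : t + -(2 • bkpShift mu⁻¹) + -(2 • bkpShift z⁻¹)
      = t - 2 • bkpShift z⁻¹ - 2 • bkpShift mu⁻¹ := by abel
  have e5 : t + -(2 • bkpShift z⁻¹) + 2 • bkpShift lam⁻¹
      = t + 2 • bkpShift lam⁻¹ - 2 • bkpShift z⁻¹ := by abel
  have e6 : t + -(2 • bkpShift mu⁻¹) = t - 2 • bkpShift mu⁻¹ := by abel
  rw [e1, e5, e4, e2, e3, e6] at key
  have c1eq : ((-z⁻¹ + lam⁻¹) * (-z⁻¹ + -mu⁻¹)) / ((-z⁻¹ - lam⁻¹) * (-z⁻¹ - -mu⁻¹))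
      = (z - lam) * (z + mu) / ((z + lam) * (z - mu)) := by
    rw [div_eq_div_iff (mul_ne_zero (sub_ne_zero.mpr h12) (sub_ne_zero.mpr h13))
      (mul_ne_zero hznl' hzm')]
    field_simp
    ring
  have c2eq : ((lam⁻¹ + -mu⁻¹) * (lam⁻¹ + -z⁻¹)) / ((lam⁻¹ - -mu⁻¹) * (lam⁻¹ - -z⁻¹))
      = (mu - lam) * (z - lam) / ((lam + mu) * (z + lam)) := by
    rw [div_eq_div_iff (mul_ne_zero (sub_ne_zero.mpr h23) (sub_ne_zero.mpr (Ne.symm h12)))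
      (mul_ne_zero hlm hznl')]
    field_simp
    ring
  have c3eq : ((-mu⁻¹ + -z⁻¹) * (-mu⁻¹ + lam⁻¹)) / ((-mu⁻¹ - -z⁻¹) * (-mu⁻¹ - lam⁻¹))
      = (z + mu) * (lam - mu) / ((z - mu) * (lam + mu)) := by
    rw [div_eq_div_iff (mul_ne_zero (sub_ne_zero.mpr (Ne.symm h13)) (sub_ne_zero.mpr (Ne.symm h23)))
      (mul_ne_zero hzm' hlm)]
    field_simp
    ring
  rw [c1eq, c2eq, c3eq] at key
  generalize τ t = a at key ⊢
  generalize τ (t + 2 • bkpShift lam⁻¹ - 2 • bkpShift z⁻¹ - 2 • bkpShift mu⁻¹) = b at key ⊢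
  generalize τ (t - 2 • bkpShift z⁻¹) = c at key ⊢
  generalize τ (t + 2 • bkpShift lam⁻¹ - 2 • bkpShift mu⁻¹) = d at key ⊢
  generalize τ (t - 2 • bkpShift mu⁻¹) = e at key ⊢
  generalize τ (t + 2 • bkpShift lam⁻¹ - 2 • bkpShift z⁻¹) = f at key ⊢
  generalize τ (t - 2 • bkpShift z⁻¹ - 2 • bkpShift mu⁻¹) = g at key ⊢
  generalize τ (t + 2 • bkpShift lam⁻¹) = h at key ⊢
  have hne : ((z+lam)*(z-mu)*(lam+mu)) ≠ 0 := mul_ne_zero (mul_ne_zero hznl' hzm') hlm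
  field_simp at key
  have key2 : (z+lam)*(z-mu)*(lam+mu) * (b*a)
      = (z-lam)*(z+mu)*(lam+mu)*(d*c) + (mu-lam)*(z-lam)*(z-mu)*(g*h)
        + (z+mu)*(lam-mu)*(z+lam)*(f*e) := by
    apply mul_right_cancel₀ hne
    linear_combination ((z+lam)*(z-mu)*(lam+mu)) * key
  field_simp
  linear_combination key2
end
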